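/- Let A be a symmetric bilinear form on a real vector space V = Z ⊕ W (direct sum of subspaces) such that A is positive semidefinite on V and there exists γ < 1 with A(z,v)² ≤ γ² A(z,z) A(v,v) for all z ∈ Z, v ∈ W. Define B((z,v),(ζ,φ)) = A(z,ζ) + A(v,φ). Then for all z ∈ Z and v ∈ W: (1/(1+γ))·A(z+v, z+v) ≤ A(z,z) + A(v,v) ≤ (1/(1−γ))·A(z+v, z+v). -/

import Mathlib

/-- Two-sided bound on the block-diagonal preconditioner: if `A` is a symmetric
positive semidefinite bilinear form on `V = Z ⊕ W` and a strengthened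
Cauchy–Schwarz inequality holds with constant `γ < 1`, then
`(1/(1+γ)) A(z+v,z+v) ≤ A(z,z) + A(v,v) ≤ (1/(1−γ)) A(z+v,z+v)`. -/
theorem stmt6 {V : Type*} [AddCommGroup V] [Module ℝ V]
    (A : V →ₗ[ℝ] V →ₗ[ℝ] ℝ) (hsymm : ∀ u w, A u w = A w u)
    (hpsd : ∀ u, 0 ≤ A u u)
    (Z W : Submodule ℝ V) (hsum : Z ⊔ W = ⊤) (hdisj : Z ⊓ W = ⊥)
    (γ : ℝ) (hγ0 : 0 ≤ γ) (hγ1 : γ < 1)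
    (hcs : ∀ z ∈ Z, ∀ v ∈ W, (A z v) ^ 2 ≤ γ ^ 2 * (A z z) * (A v v)) :
    ∀ z ∈ Z, ∀ v ∈ W,
      (1 / (1 + γ)) * A (z + v) (z + v) ≤ A z z + A v v ∧
      A z z + A v v ≤ (1 / (1 - γ)) * A (z + v) (z + v) := by
  intro z hz v hv
  have h1 := hcs z hz v hv
  have ha := hpsd z
  have hb := hpsd v
  have he : A (z + v) (z + v) = A z z + 2 * A z v + A v v := by
    simp [map_add, hsymm v z]; ring
  -- |2 A z v| ≤ γ (A z z + A v v)
  have hbound : (2 * A z v) ^ 2 ≤ (γ * (A z z + A v v)) ^ 2 := by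
    nlinarith [sq_nonneg (A z z - A v v), sq_nonneg γ, mul_nonneg ha hb,
      mul_nonneg (mul_nonneg (sq_nonneg γ) ha) hb]
  have habs : -(γ * (A z z + A v v)) ≤ 2 * A z v ∧
      2 * A z v ≤ γ * (A z z + A v v) := by
    constructor <;> nlinarith [mul_nonneg hγ0 (add_nonneg ha hb)]
  obtain ⟨hl, hr⟩ := habs
  have h1γ : (0:ℝ) < 1 + γ := by linarith
  have h2γ : (0:ℝ) < 1 - γ := by linarith
  constructor
  · rw [he, div_mul_eq_mul_div, div_le_iff₀ h1γ]
    nlinarith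
  · rw [he, div_mul_eq_mul_div, le_div_iff₀ h2γ]
    nlinarith
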